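/- Let w be a word over Σ with ι(w) = k ≥ 1. If ι(w^s) − ι(w^{s−1}) = k for all s ∈ ℕ, then ζ(w^s) − ζ(w^{s−1}) = k for all s ∈ ℕ. -/

import Mathlib

open List

variable {α : Type*}

/-- `w` is `k`-universal: every word of length `k` over the alphabet `α`
is a scattered factor (subsequence) of `w`. -/
def IsUniversal [Fintype α] (k : ℕ) (w : List α) : Prop :=
  ∀ u : List α, u.length = k → u.Sublist w

/-- The universality index `ι(w)`: the largest `k` such that `w` is `k`-universal. -/
noncomputable def univIndex [Fintype α] (w : List α) : ℕ :=
  sSup {k | IsUniversal k w}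

/-- The circular universality index `ζ(w)`: the largest `k` such that some
conjugate of `w` is `k`-universal. -/
noncomputable def circIndex [Fintype α] (w : List α) : ℕ :=
  sSup {k | ∃ u v : List α, w = u ++ v ∧ IsUniversal k (v ++ u)}

/-- `wpow w s = w^s`, the `s`-fold concatenation of `w`. -/
def wpow (w : List α) (s : ℕ) : List α := (List.replicate s w).flatten

/-- Auxiliary (fuelled) computation of the remainder of the arch factorisation:
greedily remove the shortest prefix containing every letter of the alphabet. -/
def remAux [Fintype α] [DecidableEq α] : ℕ → List α → List α
  | 0, w => w
  | (n+1), w =>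
    match (List.range' 1 w.length).find?
        (fun m => decide ((w.take m).toFinset = Finset.univ)) with
    | none => w
    | some m => remAux n (w.drop m)

/-- `rem w = r(w)`, the remainder of the arch factorisation of `w`. -/
def rem [Fintype α] [DecidableEq α] (w : List α) : List α := remAux w.length w

/-- Auxiliary (fuelled) computation of the list of arches of `w`. -/
def archesAux [Fintype α] [DecidableEq α] : ℕ → List α → List (List α)
  | 0, _ => []
  | (n+1), w =>
    match (List.range' 1 w.length).find?
        (fun m => decide ((w.take m).toFinset = Finset.univ)) with
    | none => []
    | some m => (w.take m) :: archesAux n (w.drop m)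

/-- `arches w`: the list `[arch₁(w), …, arch_{ι(w)}(w)]` of arches of `w`. -/
def arches [Fintype α] [DecidableEq α] (w : List α) : List (List α) :=
  archesAux w.length w

section Aux
variable [Fintype α]

lemma isUniversal_zero (w : List α) : IsUniversal 0 w := by
  intro u hu
  simp [List.length_eq_zero_iff.mp hu]

lemma isUniversal_of_sublist {x y : List α} (hs : x.Sublist y) {k : ℕ}
    (hx : IsUniversal k x) : IsUniversal k y :=
  fun u hu => (hx u hu).trans hs

lemma isUniversal_append {a b : ℕ} {x y : List α} (hx : IsUniversal a x)
    (hy : IsUniversal b y) : IsUniversal (a + b) (x ++ y) := by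
  intro u hu
  have h1 : (u.take a).Sublist x := hx _ (by rw [List.length_take, hu]; omega)
  have h2 : (u.drop a).Sublist y := hy _ (by rw [List.length_drop, hu]; omega)
  have := h1.append h2
  rwa [List.take_append_drop] at this

lemma bddAbove_univSet [Nonempty α] (w : List α) :
    BddAbove {k | IsUniversal k w} := by
  refine ⟨w.length, fun k hk => ?_⟩
  obtain ⟨a⟩ := ‹Nonempty α›
  have := hk (List.replicate k a) (by simp)
  simpa using this.length_le

lemma isUniversal_univIndex [Nonempty α] (w : List α) :
    IsUniversal (univIndex w) w :=
  Nat.sSup_mem ⟨0, isUniversal_zero w⟩ (bddAbove_univSet w)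

lemma le_univIndex [Nonempty α] {k : ℕ} {w : List α} (hu : IsUniversal k w) :
    k ≤ univIndex w :=
  le_csSup (bddAbove_univSet w) hu

lemma isUniversal_nil_eq_zero [Nonempty α] {k : ℕ} (hu : IsUniversal k ([] : List α)) :
    k = 0 := by
  obtain ⟨a⟩ := ‹Nonempty α›
  have := hu (List.replicate k a) (by simp)
  simpa using this.length_le

lemma univIndex_nil [Nonempty α] : univIndex ([] : List α) = 0 := by
  exact isUniversal_nil_eq_zero (isUniversal_univIndex [])

end Aux

lemma wpow_zero (w : List α) : wpow w 0 = [] := rfl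

lemma wpow_succ (w : List α) (s : ℕ) : wpow w (s+1) = w ++ wpow w s := rfl

lemma wpow_add (w : List α) (s t : ℕ) : wpow w (s+t) = wpow w s ++ wpow w t := by
  induction s with
  | zero => simp [wpow_zero]
  | succ n ih =>
    rw [show n+1+t = (n+t)+1 by ring, wpow_succ, ih, wpow_succ]
    simp

lemma wpow_mul (w : List α) (s t : ℕ) : wpow w (s*t) = wpow (wpow w s) t := by
  induction t with
  | zero => simp [wpow_zero]
  | succ n ih =>
    rw [show s*(n+1) = s + s*n by ring, wpow_add, ih, ← wpow_succ]

lemma wpow_conj (u v : List α) (t : ℕ) :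
    wpow (v ++ u) (t+1) = v ++ wpow (u ++ v) t ++ u := by
  induction t with
  | zero => simp [wpow_succ, wpow_zero]
  | succ n ih =>
    rw [wpow_succ, ih, wpow_succ]
    simp

lemma wpow_two_add (x : List α) (n : ℕ) : wpow x (n+2) = x ++ wpow x n ++ x := by
  rw [show n+2 = 1 + n + 1 by ring, wpow_add, wpow_add]
  simp [wpow_succ, wpow_zero]

lemma conj_pow_sublist (u v : List α) (t : ℕ) :
    (wpow (v ++ u) t).Sublist (wpow (u ++ v) (t+1)) := by
  cases t with
  | zero => simp [wpow_zero]
  | succ n =>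
    rw [wpow_conj, show n+1+1 = n+2 from rfl, wpow_two_add]
    exact ((List.sublist_append_right u v).append (List.Sublist.refl _)).append
      (List.sublist_append_left u v)

lemma isUniversal_wpow [Fintype α] {m : ℕ} {x : List α} (hx : IsUniversal m x) (t : ℕ) :
    IsUniversal (t * m) (wpow x t) := by
  induction t with
  | zero =>
    rw [Nat.zero_mul]
    exact isUniversal_zero _
  | succ n ih =>
    rw [wpow_succ, show (n+1)*m = m + n*m by ring]
    exact isUniversal_append hx ih

theorem circ_growth_of_univ_growth [Fintype α] (w : List α) (k : ℕ)
    (hk : univIndex w = k) (hk1 : 1 ≤ k)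
    (h : ∀ s : ℕ, 1 ≤ s → univIndex (wpow w s) = univIndex (wpow w (s - 1)) + k) :
    ∀ s : ℕ, 1 ≤ s → circIndex (wpow w s) = circIndex (wpow w (s - 1)) + k := by
  by_cases hα : Nonempty α
  swap
  · exfalso
    have h0 : univIndex w = 0 := by
      have hnb : ¬ BddAbove {j | IsUniversal j w} := by
        rintro ⟨b, hb⟩
        have h1 : (b+1) ∈ {j | IsUniversal j w} := by
          intro u hu
          cases u with
          | nil => simp at hu
          | cons a t => exact absurd ⟨a⟩ hα
        have := hb h1
        omega
      have heq : univIndex w = sSup {j | IsUniversal j w} := rfl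
      rw [heq, csSup_of_not_bddAbove hnb, csSup_empty]
      rfl
    omega
  have key : ∀ s : ℕ, univIndex (wpow w s) = s * k := by
    intro s
    induction s with
    | zero =>
      simp only [wpow_zero, Nat.zero_mul]
      exact univIndex_nil
    | succ n ih =>
      have hh := h (n+1) (by omega)
      simp only [Nat.add_sub_cancel] at hh
      rw [hh, ih]; ring
  have circ_eq : ∀ s : ℕ, circIndex (wpow w s) = s * k := by
    intro s
    have hub : ∀ m ∈ {j | ∃ u v : List α, wpow w s = u ++ v ∧ IsUniversal j (v ++ u)},
        m ≤ s * k := by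
      rintro m ⟨u, v, hw, huniv⟩
      have h1 : IsUniversal ((s*k+1) * m) (wpow (v ++ u) (s*k+1)) :=
        isUniversal_wpow huniv (s*k+1)
      have h2 : (wpow (v ++ u) (s*k+1)).Sublist (wpow w (s * (s*k+1+1))) := by
        rw [wpow_mul, hw]
        exact conj_pow_sublist u v (s*k+1)
      have h3 : (s*k+1) * m ≤ univIndex (wpow w (s * (s*k+1+1))) :=
        le_univIndex (isUniversal_of_sublist h2 h1)
      rw [key] at h3
      by_contra hcon
      push_neg at hcon
      have h4 : (s*k+1)*(s*k+1) ≤ (s*k+1)*m := Nat.mul_le_mul_left _ hcon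
      nlinarith [h3, h4]
    have hmem : s * k ∈ {j | ∃ u v : List α, wpow w s = u ++ v ∧ IsUniversal j (v ++ u)} := by
      refine ⟨[], wpow w s, by simp, ?_⟩
      rw [List.append_nil, ← key s]
      exact isUniversal_univIndex _
    have heq : circIndex (wpow w s)
        = sSup {j | ∃ u v : List α, wpow w s = u ++ v ∧ IsUniversal j (v ++ u)} := rfl
    rw [heq]
    exact le_antisymm (csSup_le ⟨s*k, hmem⟩ hub) (le_csSup ⟨s*k, hub⟩ hmem)
  intro s hs
  rw [circ_eq s, circ_eq (s-1)]
  have hss : s - 1 + 1 = s := by omega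
  calc s * k = (s - 1 + 1) * k := by rw [hss]
    _ = (s-1) * k + k := by ring
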